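/- arXiv:1906.07121 — 2 statements merged into one kernel-verified Lean document; each statement's English description precedes it below -/
import Mathlib

section
/- Let 𝒪 ⊆ 𝒪′ be orders in an imaginary quadratic field K, and let 𝔞 be a proper (equivalently, invertible) fractional 𝒪-ideal. Then the fractional 𝒪′-ideal 𝔞𝒪′ is a proper fractional 𝒪′-ideal, i.e., {x ∈ K : x·(𝔞𝒪′) ⊆ 𝔞𝒪′} = 𝒪′. -/
variable {K : Type*} [Field K]

/-- An order in a quadratic field `K`: a subring of the form `ℤ[τ]` for a quadratic
irrationality `τ` (equivalently, a subring that is free of rank 2 over `ℤ` and spans `K`). -/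
def IsQuadOrder [Algebra ℚ K] (O : Subring K) : Prop :=
  ∃ τ : K, τ ∉ Set.range (algebraMap ℚ K) ∧
    (∃ b c : ℤ, τ ^ 2 + (b : K) * τ + (c : K) = 0) ∧ O = Subring.closure {τ}

/-- `M` is a fractional `O`-ideal: a nonzero `O`-stable additive subgroup of `K` with a
common denominator in `O`. -/
def IsFracIdeal (O : Subring K) (M : Submodule ℤ K) : Prop :=
  M ≠ ⊥ ∧ (∀ o ∈ O, ∀ m ∈ M, o * m ∈ M) ∧
    ∃ d ∈ O, d ≠ 0 ∧ ∀ m ∈ M, d * m ∈ O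

/-- A fractional `O`-ideal `M` is *proper* if its multiplier ring `{x ∈ K : xM ⊆ M}`
equals `O`. -/
def IsProperFracIdeal (O : Subring K) (M : Submodule ℤ K) : Prop :=
  ∀ x : K, (∀ m ∈ M, x * m ∈ M) ↔ x ∈ O

/-- The fractional `O'`-ideal `M·O'` generated by the products of elements of `M` and `O'`. -/
def extIdeal (O' : Subring K) (M : Submodule ℤ K) : Submodule ℤ K :=
  Submodule.span ℤ {z : K | ∃ a ∈ M, ∃ b ∈ O', z = a * b}


section AuxProofs
open Submodule
variable [Algebra ℚ K]
set_option linter.unusedSectionVars false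

private lemma aux_charZero : CharZero K :=
  charZero_of_injective_algebraMap (algebraMap ℚ K).injective

private lemma aux_indep2 {τ : K} (hτ : τ ∉ Set.range (algebraMap ℚ K))
    {r s : ℤ} (h : (r : K) + (s : K) * τ = 0) : r = 0 ∧ s = 0 := by
  have := aux_charZero (K := K)
  by_cases hs : s = 0
  · subst hs; simp at h
    exact ⟨by exact_mod_cast h, rfl⟩
  · exfalso
    apply hτ
    refine ⟨(-r : ℚ) / (s : ℚ), ?_⟩
    have hsK : (s : K) ≠ 0 := by exact_mod_cast hs
    rw [map_div₀, map_neg, map_intCast, map_intCast]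
    field_simp
    linear_combination -h

private lemma aux_int_rel (hdim : Module.finrank ℚ K = 2) {τ : K}
    (hτ : τ ∉ Set.range (algebraMap ℚ K)) :
    ∃ a b c : ℤ, a ≠ 0 ∧ (a : K) * τ ^ 2 + (b : K) * τ + (c : K) = 0 := by
  have hcz := aux_charZero (K := K)
  have hfd : FiniteDimensional ℚ K := FiniteDimensional.of_finrank_pos (by omega)
  have hnli : ¬ LinearIndependent ℚ ![1, τ, τ ^ 2] := by
    intro hli
    have := hli.fintype_card_le_finrank
    simp [hdim] at this
  obtain ⟨g, hgsum, i, hgi⟩ := Fintype.not_linearIndependent_iff.1 hnli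
  rw [Fin.sum_univ_three] at hgsum
  simp only [Matrix.cons_val_zero, Matrix.cons_val_one, Matrix.head_cons,
    Matrix.cons_val_two, Matrix.tail_cons, smul_eq_mul, Algebra.smul_def,
    eq_ratCast, mul_one] at hgsum
  set A := g 2 with hA
  set B := g 1 with hB
  set C := g 0 with hC
  have hn : ∀ q : ℚ, ((q.num : K)) = (q : K) * (q.den : K) := by
    intro q
    have hden : ((q.den : ℚ)) ≠ 0 := by exact_mod_cast q.den_nz
    have h1 : ((q.num : ℚ)) = q * q.den := (div_eq_iff hden).1 (Rat.num_div_den q)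
    have h2 := congrArg (fun x : ℚ => (x : K)) h1
    push_cast at h2
    exact h2
  have hA0 : A ≠ 0 := by
    intro h2
    have h1 : B = 0 := by
      by_contra h1
      apply hτ
      refine ⟨-C / B, ?_⟩
      rw [eq_ratCast]
      push_cast
      have hBK : (B : K) ≠ 0 := by exact_mod_cast h1
      rw [h2] at hgsum; push_cast at hgsum
      field_simp
      linear_combination -hgsum
    have h0 : C = 0 := by
      rw [h2, h1] at hgsum
      push_cast at hgsum
      simp at hgsum
      exact_mod_cast hgsum
    fin_cases i <;> simp_all
  refine ⟨A.num * (B.den * C.den), B.num * (A.den * C.den), C.num * (A.den * B.den), ?_, ?_⟩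
  · simp [Rat.num_ne_zero.2 hA0, B.den_nz, C.den_nz]
  · push_cast
    rw [hn A, hn B, hn C]
    ring_nf
    ring_nf at hgsum
    linear_combination ((A.den : K) * B.den * C.den) * hgsum

private lemma aux_closure_le_span {τ : K} {b c : ℤ}
    (hrel : τ ^ 2 + (b : K) * τ + (c : K) = 0) :
    (Subring.closure {τ} : Set K) ⊆ (Submodule.span ℤ ({1, τ} : Set K) : Set K) := by
  intro x hx
  induction hx using Subring.closure_induction with
  | mem x hx => exact Submodule.subset_span (by simp at hx; simp [hx])
  | zero => exact zero_mem _
  | one => exact Submodule.subset_span (by simp)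
  | add x y hx hy ihx ihy => exact add_mem ihx ihy
  | neg x hx ihx => exact neg_mem ihx
  | mul x y hx hy ihx ihy =>
      obtain ⟨u, v, hx'⟩ := Submodule.mem_span_pair.1 ihx
      obtain ⟨s, t, hy'⟩ := Submodule.mem_span_pair.1 ihy
      refine Submodule.mem_span_pair.2 ⟨u*s - v*t*c, u*t + v*s - v*t*b, ?_⟩
      simp only [zsmul_eq_mul] at hx' hy' ⊢
      subst hx' hy'
      push_cast
      linear_combination (-(v : K)*t) * hrel

private lemma aux_primitive {τ : K} {a b c : ℤ} (ha : a ≠ 0)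
    (h : (a : K) * τ ^ 2 + (b : K) * τ + (c : K) = 0) :
    ∃ a' b' c' : ℤ, a' ≠ 0 ∧ Int.gcd (Int.gcd a' b') c' = 1 ∧
      (a' : K) * τ ^ 2 + (b' : K) * τ + (c' : K) = 0 := by
  have hcz := aux_charZero (K := K)
  set g : ℕ := Int.gcd (Int.gcd a b) c with hgdef
  have hg0 : g ≠ 0 := by
    intro h0
    rw [hgdef] at h0
    have h1 := Int.gcd_eq_zero_iff.1 h0
    have h2 := Int.gcd_eq_zero_iff.1 (by exact_mod_cast h1.1 : Int.gcd a b = 0)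
    exact ha h2.1
  have hdab : ((g : ℤ)) ∣ (Int.gcd a b : ℤ) := Int.gcd_dvd_left _ _
  have hda : ((g : ℤ)) ∣ a := hdab.trans (Int.gcd_dvd_left _ _)
  have hdb : ((g : ℤ)) ∣ b := hdab.trans (Int.gcd_dvd_right _ _)
  have hdc : ((g : ℤ)) ∣ c := Int.gcd_dvd_right _ _
  obtain ⟨a', ha'⟩ := hda
  obtain ⟨b', hb'⟩ := hdb
  obtain ⟨c', hc'⟩ := hdc
  have hgZ : ((g : ℤ)) ≠ 0 := by exact_mod_cast hg0
  refine ⟨a', b', c', ?_, ?_, ?_⟩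
  · rintro rfl; simp at ha'; exact ha ha'
  · have h1 : Int.gcd a b = g * Int.gcd a' b' := by
      rw [ha', hb', Int.gcd_mul_left]
      simp
    have h2 : (g : ℕ) = g * Int.gcd (Int.gcd a' b') c' := by
      conv_lhs => rw [hgdef]
      rw [hc', h1]
      push_cast
      rw [Int.gcd_mul_left]
      simp
    exact Nat.eq_of_mul_eq_mul_left (Nat.pos_of_ne_zero hg0) (by omega : g * Int.gcd (Int.gcd a' b') c' = g * 1)
  · have hgK : ((g : ℤ) : K) ≠ 0 := by exact_mod_cast hgZ
    have : ((g : ℤ) : K) * ((a' : K) * τ ^ 2 + (b' : K) * τ + (c' : K)) = 0 := by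
      rw [ha', hb', hc'] at h
      push_cast at h ⊢
      linear_combination h
    rcases mul_eq_zero.1 this with h' | h'
    · exact absurd h' hgK
    · exact h'

private lemma aux_dvd_of_gcd {a b c q : ℤ} (hg : Int.gcd (Int.gcd a b) c = 1)
    (hb : a ∣ q * b) (hc : a ∣ q * c) : a ∣ q := by
  have h1 : a ∣ q * a := Dvd.intro_left q rfl
  have h2 : a ∣ ((q * a).gcd (q * b) : ℤ) := Int.dvd_coe_gcd h1 hb
  rw [Int.gcd_mul_left] at h2
  have h2' : a ∣ (q.natAbs : ℤ) * (Int.gcd a b : ℤ) := by exact_mod_cast h2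
  have h3 : a ∣ (q.natAbs : ℤ) * c := by
    rcases Int.natAbs_eq q with hq | hq
    · rw [← hq]; exact hc
    · rw [show ((q.natAbs : ℤ)) = -q by omega, neg_mul]; exact dvd_neg.2 hc
  have h4 : a ∣ (((q.natAbs : ℤ) * (Int.gcd a b : ℤ)).gcd ((q.natAbs : ℤ) * c) : ℤ) :=
    Int.dvd_coe_gcd h2' h3
  rw [Int.gcd_mul_left] at h4
  simp only [Int.natAbs_natCast, hg, mul_one] at h4
  rwa [Int.dvd_natAbs] at h4

private lemma aux_multiplier {τ : K} (hτ : τ ∉ Set.range (algebraMap ℚ K))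
    {a b c : ℤ} (ha : a ≠ 0) (hg : Int.gcd (Int.gcd a b) c = 1)
    (hrel : (a : K) * τ ^ 2 + (b : K) * τ + (c : K) = 0) (x : K) :
    (∀ m ∈ span ℤ ({1, τ} : Set K), x * m ∈ span ℤ ({1, τ} : Set K)) ↔
      x ∈ span ℤ ({1, (a : K) * τ} : Set K) := by
  have hcz : CharZero K := charZero_of_injective_algebraMap (algebraMap ℚ K).injective
  have haK : (a : K) ≠ 0 := by exact_mod_cast ha
  constructor
  · intro hx
    obtain ⟨p, q, hpq⟩ := mem_span_pair.1 (hx 1 (subset_span (by simp)))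
    simp only [zsmul_eq_mul, mul_one] at hpq
    obtain ⟨u, v, huv⟩ := mem_span_pair.1 (hx τ (subset_span (by simp)))
    simp only [zsmul_eq_mul] at huv
    -- x = p + q τ ; x τ = u + v τ
    -- a p τ + q (a τ^2) = a u + a v τ, with a τ^2 = -b τ - c
    have key : ((a * u + q * c : ℤ) : K) + ((a * v - a * p + q * b : ℤ) : K) * τ = 0 := by
      push_cast
      have h1 : x * τ = (p + q * τ) * τ := by rw [hpq]
      rw [← huv] at h1
      linear_combination (a : K) * h1 + (q : K) * hrel
    obtain ⟨e1, e2⟩ := aux_indep2 hτ key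
    -- a ∣ q c and a ∣ q b
    have hqc : a ∣ q * c := ⟨-u, by linear_combination e1⟩
    have hqb : a ∣ q * b := ⟨p - v, by linear_combination e2⟩
    obtain ⟨k, hk⟩ := aux_dvd_of_gcd hg hqb hqc
    refine mem_span_pair.2 ⟨p, k, ?_⟩
    simp only [zsmul_eq_mul, mul_one]
    rw [← hpq, hk]
    push_cast
    ring
  · intro hx m hm
    obtain ⟨u, v, huv⟩ := mem_span_pair.1 hx
    obtain ⟨s, t, hst⟩ := mem_span_pair.1 hm
    simp only [zsmul_eq_mul, mul_one] at huv hst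
    refine mem_span_pair.2 ⟨u * s - v * t * c, u * t + v * a * s - v * t * b, ?_⟩
    simp only [zsmul_eq_mul, mul_one]
    rw [← huv, ← hst]
    push_cast
    linear_combination (-(v : K) * t) * hrel

private lemma aux_prod {τ : K} {a b c : ℤ} (hg : Int.gcd (Int.gcd a b) c = 1)
    (hrel : (a : K) * τ ^ 2 + (b : K) * τ + (c : K) = 0) :
    span ℤ ({1, τ} : Set K) * span ℤ ({(a : K), -(b : K) - (a : K) * τ} : Set K) =
      span ℤ ({1, (a : K) * τ} : Set K) := by
  apply le_antisymm
  · rw [Submodule.mul_le]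
    intro m hm n hn
    obtain ⟨s, t, hst⟩ := mem_span_pair.1 hm
    obtain ⟨u, v, huv⟩ := mem_span_pair.1 hn
    simp only [zsmul_eq_mul, mul_one] at hst huv
    refine mem_span_pair.2 ⟨s * u * a - s * v * b + t * v * c, t * u - s * v, ?_⟩
    simp only [zsmul_eq_mul, mul_one]
    rw [← hst, ← huv]
    push_cast
    linear_combination ((t : K) * v) * hrel
  · -- uses Bezout
    obtain ⟨e, f, hef⟩ : ∃ e f : ℤ, (Int.gcd a b : ℤ) * e + c * f = 1 := by
      have := Int.gcd_eq_gcd_ab ((Int.gcd a b : ℤ)) c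
      exact ⟨Int.gcdA _ c, Int.gcdB _ c, by rw [← this, hg]; norm_num⟩
    obtain ⟨e', f', hef'⟩ : ∃ e' f' : ℤ, a * e' + b * f' = (Int.gcd a b : ℤ) :=
      ⟨Int.gcdA a b, Int.gcdB a b, (Int.gcd_eq_gcd_ab a b).symm⟩
    set P := span ℤ ({1, τ} : Set K) * span ℤ ({(a : K), -(b : K) - (a : K) * τ} : Set K)
      with hP
    have hmem : ∀ z w : K, z ∈ ({1, τ} : Set K) → w ∈ ({(a : K), -(b : K) - (a : K) * τ} : Set K)
        → z * w ∈ P :=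
      fun z w hz hw => Submodule.mul_mem_mul (subset_span hz) (subset_span hw)
    have haP : ((a : K)) ∈ P := by
      have := hmem 1 (a : K) (by simp) (by simp)
      simpa using this
    have haτP : ((a : K)) * τ ∈ P := by
      have := hmem τ (a : K) (by simp) (by simp)
      simpa [mul_comm] using this
    have hbP : ((b : K)) ∈ P := by
      have h1 := hmem 1 (-(b : K) - (a : K) * τ) (by simp) (by simp)
      simp only [one_mul] at h1
      have : ((b : K)) = -(-(b : K) - (a : K) * τ) - ((a : K) * τ) := by ring
      rw [this]
      exact sub_mem (neg_mem h1) haτP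
    have hcP : ((c : K)) ∈ P := by
      have h1 := hmem τ (-(b : K) - (a : K) * τ) (by simp) (by simp)
      have : ((c : K)) = τ * (-(b : K) - (a : K) * τ) := by linear_combination hrel
      rw [this]
      exact h1
    have h1P : (1 : K) ∈ P := by
      have : (1 : K) = ((e' * e : ℤ)) • ((a : K)) + ((f' * e : ℤ)) • ((b : K)) + (f : ℤ) • ((c : K)) := by
        simp only [zsmul_eq_mul]
        have h3 : ((a * e' + b * f' : ℤ) : K) = (((Int.gcd a b : ℤ) : ℤ) : K) := by rw [hef']
        have h4 : (((Int.gcd a b : ℤ) * e + c * f : ℤ) : K) = ((1 : ℤ) : K) := by rw [hef]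
        push_cast at h3 h4 ⊢
        linear_combination (-(e : K)) * h3 - h4
      rw [this]
      exact add_mem (add_mem (Submodule.smul_mem P _ haP) (Submodule.smul_mem P _ hbP))
        (Submodule.smul_mem P _ hcP)
    rw [span_le]
    rintro z (rfl | rfl)
    · exact h1P
    · exact haτP

private lemma aux_two_gen (hdim : Module.finrank ℚ K = 2)
    (O : Subring K) (hO : IsQuadOrder O)
    (M : Submodule ℤ K) (hfrac : IsFracIdeal O M) :
    ∃ α β : K, α ≠ 0 ∧ β / α ∉ Set.range (algebraMap ℚ K) ∧
      M = span ℤ ({α, β} : Set K) := by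
  have hcz := aux_charZero (K := K)
  have hfd : FiniteDimensional ℚ K := FiniteDimensional.of_finrank_pos (by omega)
  obtain ⟨τ, hτ, ⟨b, c, hrel⟩, hOc⟩ := hO
  obtain ⟨hM0, hstab, d, hdO, hd0, hdM⟩ := hfrac
  -- the ambient lattice P
  set w : Fin 2 → K := ![d⁻¹, d⁻¹ * τ] with hw
  have hw0 : w 0 = d⁻¹ := rfl
  have hw1 : w 1 = d⁻¹ * τ := rfl
  -- ℚ-linear independence of w, hence ℤ-linear independence
  have hwindepQ : LinearIndependent ℚ w := by
    rw [hw, LinearIndependent.pair_iff]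
    intro s t hst
    rw [Algebra.smul_def, Algebra.smul_def, eq_ratCast, eq_ratCast] at hst
    have hd0' : (d : K)⁻¹ ≠ 0 := inv_ne_zero hd0
    by_cases ht : t = 0
    · subst ht
      simp only [Rat.cast_zero, zero_mul, add_zero, mul_eq_zero] at hst
      rcases hst with h | h
      · exact ⟨by exact_mod_cast h, rfl⟩
      · exact absurd h hd0'
    · exfalso
      apply hτ
      refine ⟨-s / t, ?_⟩
      rw [eq_ratCast]
      push_cast
      have htK : ((t : ℚ) : K) ≠ 0 := by exact_mod_cast ht
      field_simp
      have := mul_left_cancel₀ hd0' (show (d : K)⁻¹ * ((s : K) + (t : K) * τ) = d⁻¹ * 0 by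
        rw [mul_zero]; rw [← hst]; ring)
      linear_combination -this
  have hwindep : LinearIndependent ℤ w :=
    (LinearIndependent.iff_fractionRing ℤ ℚ).2 hwindepQ
  set P : Submodule ℤ K := span ℤ (Set.range w) with hP
  have hMP : M ≤ P := by
    intro m hm
    have hdm : d * m ∈ span ℤ ({1, τ} : Set K) := by
      apply aux_closure_le_span hrel
      rw [← SetLike.mem_coe] at *
      exact_mod_cast (hOc ▸ hdM m hm)
    obtain ⟨u, v, huv⟩ := mem_span_pair.1 hdm
    have hmem0 : w 0 ∈ P := subset_span ⟨0, rfl⟩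
    have hmem1 : w 1 ∈ P := subset_span ⟨1, rfl⟩
    have : m = u • w 0 + v • w 1 := by
      rw [hw0, hw1]
      simp only [zsmul_eq_mul] at huv ⊢
      have : m = d⁻¹ * (d * m) := by field_simp
      rw [this, ← huv]
      ring
    rw [this]
    exact add_mem (Submodule.smul_mem P u hmem0) (Submodule.smul_mem P v hmem1)
  -- basis of P
  have bP : Module.Basis (Fin 2) ℤ P := Module.Basis.span hwindep
  -- M as a submodule of P
  set M' : Submodule ℤ P := comap P.subtype M with hM'
  obtain ⟨n, bn⟩ := Submodule.basisOfPid bP M'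
  -- the composite embedding
  set e : M' →ₗ[ℤ] K := P.subtype.comp M'.subtype with he
  have hker : LinearMap.ker e = ⊥ := by
    rw [he, LinearMap.ker_comp, Submodule.ker_subtype, Submodule.comap_bot,
      LinearMap.ker_eq_bot']
    intro m hm
    exact Subtype.ext (by simpa using congrArg Subtype.val hm)
  have hrange : LinearMap.range e = M := by
    rw [he, LinearMap.range_comp, Submodule.range_subtype, hM', Submodule.map_comap_subtype]
    exact inf_eq_right.2 hMP
  have hMspan : M = span ℤ (Set.range (⇑e ∘ ⇑bn)) := by
    rw [Set.range_comp, ← Submodule.map_span, bn.span_eq, Submodule.map_top, hrange]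
  have hindepn : LinearIndependent ℤ (⇑e ∘ ⇑bn) := bn.linearIndependent.map' e hker
  have hn2 : n ≤ 2 := by
    have hQ : LinearIndependent ℚ (⇑e ∘ ⇑bn) := (LinearIndependent.iff_fractionRing ℤ ℚ).1 hindepn
    have := hQ.fintype_card_le_finrank
    simpa [hdim] using this
  interval_cases n
  · -- n = 0 : M = ⊥, contradiction
    exfalso
    apply hM0
    rw [hMspan, Set.range_eq_empty, span_empty]
  · -- n = 1 : M = span {α}, contradiction with irrationality of τ
    exfalso
    set α : K := (⇑e ∘ ⇑bn) 0 with hα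
    have hMs : M = span ℤ ({α} : Set K) := by
      rw [hMspan]
      congr 1
      exact Set.range_unique
    have hα0 : α ≠ 0 := by
      intro h0
      apply hM0
      rw [hMs, h0, Submodule.span_zero_singleton]
    have hτO : τ ∈ O := by
      rw [hOc]; exact Subring.subset_closure rfl
    have hαM : α ∈ M := by
      rw [hMs]; exact subset_span rfl
    obtain ⟨k, hk⟩ := Submodule.mem_span_singleton.1 (hMs ▸ hstab τ hτO α hαM)
    apply hτ
    refine ⟨(k : ℚ), ?_⟩
    rw [eq_ratCast]
    push_cast
    simp only [zsmul_eq_mul] at hk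
    exact mul_right_cancel₀ hα0 (by rw [hk])
  · -- n = 2
    set α : K := (⇑e ∘ ⇑bn) 0 with hα
    set β : K := (⇑e ∘ ⇑bn) 1 with hβ
    have hα0 : α ≠ 0 := hindepn.ne_zero 0
    refine ⟨α, β, hα0, ?_, ?_⟩
    · rintro ⟨q, hq⟩
      rw [eq_ratCast] at hq
      have hβq : β = (q : K) * α := by
        rw [hq]; exact (div_mul_cancel₀ β hα0).symm
      have hnum : ((q.num : K)) = (q : K) * (q.den : K) := by
        have hden : ((q.den : ℚ)) ≠ 0 := by exact_mod_cast q.den_nz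
        have h1 : ((q.num : ℚ)) = q * q.den := (div_eq_iff hden).1 (Rat.num_div_den q)
        have h2 := congrArg (fun x : ℚ => (x : K)) h1
        push_cast at h2
        exact h2
      have hrel2 : (-q.num : ℤ) • α + (q.den : ℤ) • β = 0 := by
        simp only [zsmul_eq_mul]
        rw [hβq]
        push_cast
        linear_combination (-α) * hnum
      have := Fintype.linearIndependent_iff.1 hindepn ![-q.num, (q.den : ℤ)]
        (by rw [Fin.sum_univ_two]; exact hrel2) 1
      simp at this
    · rw [hMspan]
      congr 1
      ext z
      simp only [Set.mem_range, Set.mem_insert_iff, Set.mem_singleton_iff]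
      rw [Fin.exists_fin_two]
      tauto

private lemma aux_invertible (hdim : Module.finrank ℚ K = 2)
    (O : Subring K) (hO : IsQuadOrder O)
    (M : Submodule ℤ K) (hfrac : IsFracIdeal O M) (hprop : IsProperFracIdeal O M) :
    ∃ N : Submodule ℤ K,
      M * N = AddSubgroup.toIntSubmodule O.toAddSubgroup := by
  obtain ⟨α, β, hα0, hτ0, hMs⟩ := aux_two_gen hdim O hO M hfrac
  set τ₀ : K := β / α with hτdef
  have hβ : β = α * τ₀ := by
    rw [hτdef]; field_simp
  have hM1 : M = span ℤ ({α} : Set K) * span ℤ ({1, τ₀} : Set K) := by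
    rw [span_mul_span, Set.singleton_mul, Set.image_pair, mul_one, ← hβ, hMs]
  -- multiplier transfer
  have htrans : ∀ x : K, (∀ m ∈ span ℤ ({1, τ₀} : Set K), x * m ∈ span ℤ ({1, τ₀} : Set K))
      ↔ (∀ m ∈ M, x * m ∈ M) := by
    intro x
    constructor
    · intro hx m hm
      rw [hM1] at hm ⊢
      obtain ⟨z, hz, rfl⟩ := Submodule.mem_span_singleton_mul.1 hm
      exact Submodule.mem_span_singleton_mul.2 ⟨x * z, hx z hz, by ring⟩
    · intro hx m hm
      have h1 : α * m ∈ M := by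
        rw [hM1]
        exact Submodule.mem_span_singleton_mul.2 ⟨m, hm, rfl⟩
      have h2 := hx _ h1
      rw [hM1] at h2
      obtain ⟨z, hz, hz'⟩ := Submodule.mem_span_singleton_mul.1 h2
      have : z = x * m := by
        apply mul_left_cancel₀ hα0
        rw [hz']; ring
      rwa [← this]
  -- quadratic relation for τ₀
  obtain ⟨a0, b0, c0, ha0, hrel0⟩ := aux_int_rel hdim hτ0
  obtain ⟨a, b, c, ha, hg, hrel⟩ := aux_primitive ha0 hrel0
  -- O = span {1, a τ₀}
  have hOspan : AddSubgroup.toIntSubmodule O.toAddSubgroup = span ℤ ({1, (a : K) * τ₀} : Set K) := by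
    ext z
    have hz : z ∈ AddSubgroup.toIntSubmodule O.toAddSubgroup ↔ z ∈ O := Iff.rfl
    rw [hz]
    rw [← hprop z, ← htrans z, aux_multiplier hτ0 ha hg hrel z]
  refine ⟨span ℤ ({α⁻¹} : Set K) * span ℤ ({(a : K), -(b : K) - (a : K) * τ₀} : Set K), ?_⟩
  rw [hM1, hOspan, mul_mul_mul_comm, span_mul_span ℤ ({α} : Set K), Set.singleton_mul_singleton,
    mul_inv_cancel₀ hα0, aux_prod hg hrel, ← one_eq_span, one_mul]

end AuxProofs

open Submodule in
/-- Let `𝒪 ⊆ 𝒪′` be orders in an imaginary quadratic field `K` and `𝔞` a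
proper fractional `𝒪`-ideal.  Then `𝔞𝒪′` is a proper fractional `𝒪′`-ideal, i.e.
`{x ∈ K : x·(𝔞𝒪′) ⊆ 𝔞𝒪′} = 𝒪′`. -/
theorem extIdeal_isProper
    (K : Type*) [Field K] [Algebra ℚ K]
    (hdim : Module.finrank ℚ K = 2) (himag : IsEmpty (K →+* ℝ))
    (O O' : Subring K) (hO : IsQuadOrder O) (hO' : IsQuadOrder O') (hle : O ≤ O')
    (M : Submodule ℤ K) (hfrac : IsFracIdeal O M) (hprop : IsProperFracIdeal O M) :
    IsProperFracIdeal O' (extIdeal O' M) := by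
  set OS : Submodule ℤ K := AddSubgroup.toIntSubmodule O.toAddSubgroup with hOS
  set OS' : Submodule ℤ K := AddSubgroup.toIntSubmodule O'.toAddSubgroup with hOS'
  have hmemOS' : ∀ z : K, z ∈ OS' ↔ z ∈ O' := fun z => Iff.rfl
  have hext : extIdeal O' M = M * OS' := by
    rw [extIdeal]
    conv_rhs => rw [← span_eq M, ← span_eq OS', span_mul_span]
    congr 1
    ext z
    simp only [Set.mem_setOf_eq, Set.mem_mul, SetLike.mem_coe]
    constructor
    · rintro ⟨u, hu, v, hv, rfl⟩
      exact ⟨u, hu, v, hv, rfl⟩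
    · rintro ⟨u, hu, v, hv, rfl⟩
      exact ⟨u, hu, v, hv, rfl⟩
  have hOO' : OS * OS' = OS' := by
    apply le_antisymm
    · rw [Submodule.mul_le]
      intro o ho o' ho'
      exact (hmemOS' _).2 (mul_mem (hle ho) ho')
    · intro z hz
      have : (1 : K) * z ∈ OS * OS' := Submodule.mul_mem_mul O.one_mem hz
      rwa [one_mul] at this
  obtain ⟨N, hN⟩ := aux_invertible hdim O hO M hfrac hprop
  intro x
  rw [hext]
  constructor
  · intro hx
    have h1 : span ℤ ({x} : Set K) * (M * OS') ≤ M * OS' := by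
      rw [Submodule.mul_le]
      intro y hy n hn
      obtain ⟨k, rfl⟩ := Submodule.mem_span_singleton.1 hy
      rw [smul_mul_assoc]
      exact Submodule.smul_mem _ k (hx n hn)
    have h2 : span ℤ ({x} : Set K) * OS' ≤ OS' := by
      conv_lhs => rw [← hOO', hOS, ← hN]
      have hre : span ℤ ({x} : Set K) * (M * N * OS') =
          (span ℤ ({x} : Set K) * (M * OS')) * N := by ring
      rw [hre]
      calc (span ℤ ({x} : Set K) * (M * OS')) * N ≤ (M * OS') * N :=
            mul_le_mul' h1 le_rfl
        _ = (M * N) * OS' := by ring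
        _ = OS * OS' := by rw [hN, ← hOS]
        _ = OS' := hOO'
    have : x * 1 ∈ span ℤ ({x} : Set K) * OS' :=
      Submodule.mul_mem_mul (Submodule.mem_span_singleton_self x) ((hmemOS' 1).2 O'.one_mem)
    rw [mul_one] at this
    exact h2 this
  · intro hxO' m hm
    have h3 : (M * OS') * span ℤ ({x} : Set K) ≤ M * OS' := by
      rw [mul_assoc]
      apply mul_le_mul' le_rfl
      rw [Submodule.mul_le]
      intro s hs y hy
      obtain ⟨k, rfl⟩ := Submodule.mem_span_singleton.1 hy
      rw [mul_smul_comm]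
      exact Submodule.smul_mem _ k ((hmemOS' _).2 (mul_mem ((hmemOS' s).1 hs) hxO'))
    have : m * x ∈ (M * OS') * span ℤ ({x} : Set K) :=
      Submodule.mul_mem_mul hm (Submodule.mem_span_singleton_self x)
    rw [mul_comm m x] at this
    exact h3 this
end

section
/- Let 𝒪 be an order of conductor 𝔣 in an imaginary quadratic field, and let ℓ be a prime dividing 𝔣. Then the action of C_{ℓ²}(𝒪) = (𝒪/ℓ²𝒪)^× on the set of elements of 𝒪/ℓ²𝒪 of additive order ℓ² has exactly ℓ + 1 orbits: one orbit of size ℓ³(ℓ − 1) and ℓ orbits each of size ℓ(ℓ − 1). -/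
/-- The order `ℤ + f·𝒪_K` of conductor `f` in `K`. -/
noncomputable def condOrder (K : Type*) [Field K] (f : ℕ) : Subring K :=
  Subring.closure ((fun y : K => (f : K) * y) '' (integralClosure ℤ K : Set K))


section PartA

@[ext] structure QR (n : ℕ) (e : ZMod n) : Type where
  a : ZMod n
  b : ZMod n

namespace QR
variable {n : ℕ} {e : ZMod n}

instance : Add (QR n e) := ⟨fun x y => ⟨x.a + y.a, x.b + y.b⟩⟩
instance : Mul (QR n e) := ⟨fun x y => ⟨x.a * y.a, x.a * y.b + x.b * y.a + e * x.b * y.b⟩⟩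
instance : Zero (QR n e) := ⟨⟨0, 0⟩⟩
instance : One (QR n e) := ⟨⟨1, 0⟩⟩
instance : Neg (QR n e) := ⟨fun x => ⟨-x.a, -x.b⟩⟩

@[simp] lemma add_a (x y : QR n e) : (x + y).a = x.a + y.a := rfl
@[simp] lemma add_b (x y : QR n e) : (x + y).b = x.b + y.b := rfl
@[simp] lemma mul_a (x y : QR n e) : (x * y).a = x.a * y.a := rfl
@[simp] lemma mul_b (x y : QR n e) : (x * y).b = x.a * y.b + x.b * y.a + e * x.b * y.b := rfl
@[simp] lemma zero_a : (0 : QR n e).a = 0 := rfl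
@[simp] lemma zero_b : (0 : QR n e).b = 0 := rfl
@[simp] lemma one_a : (1 : QR n e).a = 1 := rfl
@[simp] lemma one_b : (1 : QR n e).b = 0 := rfl
@[simp] lemma neg_a (x : QR n e) : (-x).a = -x.a := rfl
@[simp] lemma neg_b (x : QR n e) : (-x).b = -x.b := rfl

instance : CommRing (QR n e) where
  add_assoc x y z := by ext <;> simp <;> ring
  zero_add x := by ext <;> simp
  add_zero x := by ext <;> simp
  add_comm x y := by ext <;> simp <;> ring
  left_distrib x y z := by ext <;> simp <;> ring
  right_distrib x y z := by ext <;> simp <;> ring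
  zero_mul x := by ext <;> simp
  mul_zero x := by ext <;> simp
  mul_assoc x y z := by ext <;> simp <;> ring
  one_mul x := by ext <;> simp
  mul_one x := by ext <;> simp
  mul_comm x y := by ext <;> simp <;> ring
  neg_add_cancel x := by ext <;> simp
  nsmul := nsmulRec
  zsmul := zsmulRec

@[simp] lemma natCast_a (m : ℕ) : ((m : ℕ) : QR n e).a = (m : ZMod n) := by
  induction m with
  | zero => simp
  | succ k ih => push_cast; simp [ih]

@[simp] lemma natCast_b (m : ℕ) : ((m : ℕ) : QR n e).b = 0 := by
  induction m with
  | zero => simp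
  | succ k ih => push_cast; simp [ih]

@[simp] lemma nsmul_a (k : ℕ) (x : QR n e) : (k • x).a = k • x.a := by
  induction k with
  | zero => simp
  | succ m ih => simp [succ_nsmul, ih]

@[simp] lemma nsmul_b (k : ℕ) (x : QR n e) : (k • x).b = k • x.b := by
  induction k with
  | zero => simp
  | succ m ih => simp [succ_nsmul, ih]

/-- equivalence with the product, for finiteness -/
def prodEquiv : QR n e ≃ ZMod n × ZMod n where
  toFun x := (x.a, x.b)
  invFun p := ⟨p.1, p.2⟩
  left_inv x := rfl
  right_inv p := rfl

instance [NeZero n] : Finite (QR n e) := Finite.of_equiv _ (prodEquiv).symm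

/-- first component as ring hom -/
def fstHom : QR n e →+* ZMod n where
  toFun x := x.a
  map_one' := rfl
  map_mul' x y := rfl
  map_zero' := rfl
  map_add' x y := rfl

/-- constants as ring hom -/
def cHom : ZMod n →+* QR n e where
  toFun a := ⟨a, 0⟩
  map_one' := rfl
  map_mul' x y := by ext <;> simp
  map_zero' := rfl
  map_add' x y := by ext <;> simp

end QR
end PartA
section Lsq

/-- reduction mod ℓ from `ZMod (ℓ^2)` -/
def pr (ℓ : ℕ) : ZMod (ℓ^2) →+* ZMod ℓ :=
  ZMod.castHom (dvd_pow_self ℓ two_ne_zero) (ZMod ℓ)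

variable {ℓ : ℕ}

lemma lsq0 : (ℓ : ZMod (ℓ^2)) * ℓ = 0 := by
  have h : (((ℓ^2 : ℕ)) : ZMod (ℓ^2)) = 0 := ZMod.natCast_self _
  push_cast at h
  linear_combination h

lemma pr_natCast (m : ℕ) : pr ℓ ((m : ℕ) : ZMod (ℓ^2)) = (m : ZMod ℓ) := map_natCast _ m

lemma pr_eq_zero_iff (hℓ : ℓ.Prime) (a : ZMod (ℓ^2)) : pr ℓ a = 0 ↔ ∃ b, a = (ℓ : ZMod (ℓ^2)) * b := by
  haveI : NeZero (ℓ^2) := ⟨pow_ne_zero 2 hℓ.ne_zero⟩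
  constructor
  · intro h
    have hv : ((a.val : ℕ) : ZMod (ℓ^2)) = a := ZMod.natCast_rightInverse a
    rw [← hv, pr_natCast, ZMod.natCast_eq_zero_iff] at h
    obtain ⟨k, hk⟩ := h
    exact ⟨(k : ZMod (ℓ^2)), by rw [← hv, hk]; push_cast; ring⟩
  · rintro ⟨b, rfl⟩
    rw [map_mul, pr_natCast, ZMod.natCast_self, zero_mul]

lemma mul_l_eq_zero_iff (hℓ : ℓ.Prime) (a : ZMod (ℓ^2)) :
    (ℓ : ZMod (ℓ^2)) * a = 0 ↔ pr ℓ a = 0 := by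
  haveI : NeZero (ℓ^2) := ⟨pow_ne_zero 2 hℓ.ne_zero⟩
  constructor
  · intro h
    have hv : ((a.val : ℕ) : ZMod (ℓ^2)) = a := ZMod.natCast_rightInverse a
    rw [← hv, ← Nat.cast_mul, ZMod.natCast_eq_zero_iff] at h
    have hd : ℓ ∣ a.val := by
      rcases h with ⟨k, hk⟩
      refine ⟨k, ?_⟩
      have h2 : ℓ * a.val = ℓ * (ℓ * k) := by rw [hk]; ring
      exact Nat.eq_of_mul_eq_mul_left hℓ.pos h2
    rw [← hv, pr_natCast, ZMod.natCast_eq_zero_iff]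
    exact hd
  · intro h
    obtain ⟨b, rfl⟩ := (pr_eq_zero_iff hℓ a).1 h
    rw [← mul_assoc, lsq0, zero_mul]

lemma mul_l_eq_iff (hℓ : ℓ.Prime) (a b : ZMod (ℓ^2)) :
    (ℓ : ZMod (ℓ^2)) * a = (ℓ : ZMod (ℓ^2)) * b ↔ pr ℓ a = pr ℓ b := by
  rw [← sub_eq_zero, ← mul_sub, mul_l_eq_zero_iff hℓ, map_sub, sub_eq_zero]

lemma isUnit_iff_pr (hℓ : ℓ.Prime) (a : ZMod (ℓ^2)) : IsUnit a ↔ pr ℓ a ≠ 0 := by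
  haveI : NeZero (ℓ^2) := ⟨pow_ne_zero 2 hℓ.ne_zero⟩
  haveI : Fact (1 < ℓ^2) := ⟨by nlinarith [hℓ.two_le]⟩
  constructor
  · intro hu h
    obtain ⟨b, rfl⟩ := (pr_eq_zero_iff hℓ a).1 h
    have h2 : ((ℓ : ZMod (ℓ^2)) * b)^2 = 0 := by
      have h3 := lsq0 (ℓ := ℓ); linear_combination (b*b) * h3
    have h0 : IsUnit (0 : ZMod (ℓ^2)) := by rw [← h2]; exact hu.pow 2
    rw [isUnit_zero_iff] at h0
    exact zero_ne_one h0
  · intro h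
    have hv : ((a.val : ℕ) : ZMod (ℓ^2)) = a := ZMod.natCast_rightInverse a
    have hnd : ¬ ℓ ∣ a.val := by
      intro hd
      apply h
      rw [← hv, pr_natCast, ZMod.natCast_eq_zero_iff]
      exact hd
    have hco : Nat.Coprime a.val (ℓ^2) :=
      Nat.Coprime.pow_right 2 ((Nat.Prime.coprime_iff_not_dvd hℓ).2 hnd).symm
    rw [← hv]
    exact (ZMod.isUnit_iff_coprime a.val (ℓ^2)).2 hco

/-- units of a monoid are equivalent to the subtype of unit elements -/
noncomputable def unitsEquivSubtype {M : Type*} [Monoid M] : Mˣ ≃ {x : M // IsUnit x} where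
  toFun u := ⟨u, u.isUnit⟩
  invFun x := x.2.unit
  left_inv u := Units.ext u.isUnit.unit_spec
  right_inv x := Subtype.ext x.2.unit_spec

lemma card_isUnit_zmod (hℓ : ℓ.Prime) : Nat.card {x : ZMod (ℓ^2) // IsUnit x} = ℓ * (ℓ - 1) := by
  haveI : NeZero (ℓ^2) := ⟨pow_ne_zero 2 hℓ.ne_zero⟩
  rw [Nat.card_congr unitsEquivSubtype.symm, Nat.card_eq_fintype_card,
    ZMod.card_units_eq_totient, Nat.totient_prime_pow hℓ (by norm_num)]
  norm_num

end Lsq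
section Orbits

/-- orbit of `x` under the unit group action -/
def orb {A : Type*} [Monoid A] (x : A) : Set A := {y | ∃ g : Aˣ, y = (g : A) * x}

/-- set of orbits of elements of additive order `m` -/
def orbSet (A : Type*) [Ring A] (m : ℕ) : Set (Set A) :=
  {s | ∃ x : A, addOrderOf x = m ∧ s = orb x}

variable {A : Type*} [CommRing A]

lemma mem_orb_self (x : A) : x ∈ orb x := ⟨1, by simp⟩

lemma orb_unit_smul (g : Aˣ) (x : A) : orb ((g : A) * x) = orb x := by
  ext y
  constructor
  · rintro ⟨h, rfl⟩
    exact ⟨h * g, by rw [Units.val_mul, mul_assoc]⟩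
  · rintro ⟨h, rfl⟩
    exact ⟨h * g⁻¹, by rw [Units.val_mul, mul_assoc, ← mul_assoc ((g⁻¹ : Aˣ) : A),
      Units.inv_mul, one_mul]⟩

lemma orb_eq_of_mem {x y : A} (h : y ∈ orb x) : orb y = orb x := by
  obtain ⟨g, rfl⟩ := h
  exact orb_unit_smul g x

lemma orb_of_isUnit {x : A} (hx : IsUnit x) : orb x = {y | IsUnit y} := by
  ext y
  constructor
  · rintro ⟨g, rfl⟩
    exact g.isUnit.mul hx
  · intro hy
    refine ⟨hy.unit * hx.unit⁻¹, ?_⟩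
    rw [Units.val_mul, mul_assoc, IsUnit.val_inv_mul, mul_one, IsUnit.unit_spec]

end Orbits

section QeOrbits

variable {ℓ : ℕ}

/-- the distinguished non-unit orbits -/
def Om (v : ZMod (ℓ^2)) (r : ZMod ℓ) : Set (QR (ℓ^2) ((ℓ : ZMod (ℓ^2)) * v)) :=
  {y | IsUnit y.b ∧ y.a = (ℓ : ZMod (ℓ^2)) * (r.val : ZMod (ℓ^2)) * y.b}

/-- representatives of the non-unit orbits -/
def Xr (v : ZMod (ℓ^2)) (r : ZMod ℓ) : QR (ℓ^2) ((ℓ : ZMod (ℓ^2)) * v) :=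
  ⟨(ℓ : ZMod (ℓ^2)) * (r.val : ZMod (ℓ^2)), 1⟩

variable (hℓ : ℓ.Prime) (v : ZMod (ℓ^2))

lemma pr_rval (hℓ : ℓ.Prime) (r : ZMod ℓ) : pr ℓ ((r.val : ℕ) : ZMod (ℓ^2)) = r := by
  haveI : NeZero ℓ := ⟨hℓ.ne_zero⟩
  rw [pr_natCast]
  exact ZMod.natCast_rightInverse r

lemma isUnit_iff_Q (hℓ : ℓ.Prime) (x : QR (ℓ^2) ((ℓ : ZMod (ℓ^2)) * v)) :
    IsUnit x ↔ IsUnit x.a := by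
  constructor
  · intro h
    exact h.map QR.fstHom
  · intro h
    have hnil : IsNilpotent (⟨0, x.b⟩ : QR (ℓ^2) ((ℓ : ZMod (ℓ^2)) * v)) := by
      refine ⟨3, ?_⟩
      have h2 : ((ℓ : ZMod (ℓ^2)) * v) * ((ℓ : ZMod (ℓ^2)) * v) = 0 := by
        have h3 := lsq0 (ℓ := ℓ)
        linear_combination (v * v) * h3
      have hrw : (⟨0, x.b⟩ : QR (ℓ^2) ((ℓ : ZMod (ℓ^2)) * v))^3
          = ⟨0, x.b⟩ * ⟨0, x.b⟩ * ⟨0, x.b⟩ := by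
        ring
      rw [hrw]
      ext
      · simp
      · simp
        linear_combination (x.b * x.b * x.b) * h2
    have hu0 : IsUnit (⟨x.a, 0⟩ : QR (ℓ^2) ((ℓ : ZMod (ℓ^2)) * v)) := h.map QR.cHom
    have hsum := hnil.isUnit_add_right_of_commute hu0 (Commute.all _ _)
    have hx : (⟨0, x.b⟩ : QR (ℓ^2) ((ℓ : ZMod (ℓ^2)) * v)) + ⟨x.a, 0⟩ = x := by
      ext <;> simp
    rwa [hx] at hsum

lemma isUnit_iff_prQ (hℓ : ℓ.Prime) (x : QR (ℓ^2) ((ℓ : ZMod (ℓ^2)) * v)) :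
    IsUnit x ↔ pr ℓ x.a ≠ 0 :=
  (isUnit_iff_Q v hℓ x).trans (isUnit_iff_pr hℓ _)

lemma nsmul_l_zero_iff (hℓ : ℓ.Prime) (x : QR (ℓ^2) ((ℓ : ZMod (ℓ^2)) * v)) :
    ℓ • x = 0 ↔ (pr ℓ x.a = 0 ∧ pr ℓ x.b = 0) := by
  constructor
  · intro h
    have ha := congrArg QR.a h
    have hb := congrArg QR.b h
    simp [nsmul_eq_mul] at ha hb
    exact ⟨(mul_l_eq_zero_iff hℓ _).1 ha, (mul_l_eq_zero_iff hℓ _).1 hb⟩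
  · rintro ⟨h1, h2⟩
    ext
    · simpa [nsmul_eq_mul] using (mul_l_eq_zero_iff hℓ _).2 h1
    · simpa [nsmul_eq_mul] using (mul_l_eq_zero_iff hℓ _).2 h2

lemma qAddOrderOf_eq_iff (hℓ : ℓ.Prime) (x : QR (ℓ^2) ((ℓ : ZMod (ℓ^2)) * v)) :
    addOrderOf x = ℓ^2 ↔ ¬(pr ℓ x.a = 0 ∧ pr ℓ x.b = 0) := by
  have hdvd : addOrderOf x ∣ ℓ^2 := by
    apply addOrderOf_dvd_of_nsmul_eq_zero
    ext <;> simp only [QR.nsmul_a, QR.nsmul_b, nsmul_eq_mul, QR.mul_a, QR.mul_b,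
      QR.natCast_a, QR.natCast_b, ZMod.natCast_self, zero_mul, mul_zero, add_zero,
      zero_add, QR.zero_a, QR.zero_b]
  constructor
  · intro h hc
    have h1 : ℓ • x = 0 := (nsmul_l_zero_iff v hℓ x).2 hc
    have h2 : addOrderOf x ∣ ℓ := addOrderOf_dvd_iff_nsmul_eq_zero.2 h1
    rw [h] at h2
    have := Nat.le_of_dvd hℓ.pos h2
    nlinarith [hℓ.two_le]
  · intro h
    rcases (Nat.dvd_prime_pow hℓ).1 hdvd with ⟨k, hk2, hke⟩
    interval_cases k
    · exfalso
      apply h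
      apply (nsmul_l_zero_iff v hℓ x).1
      apply addOrderOf_dvd_iff_nsmul_eq_zero.1
      rw [hke, pow_zero]
      exact one_dvd ℓ
    · exfalso
      apply h
      apply (nsmul_l_zero_iff v hℓ x).1
      apply addOrderOf_dvd_iff_nsmul_eq_zero.1
      rw [hke, pow_one]
    · exact hke

lemma mem_Om_iff (r : ZMod ℓ) (y : QR (ℓ^2) ((ℓ : ZMod (ℓ^2)) * v)) :
    y ∈ Om v r ↔ IsUnit y.b ∧ y.a = (ℓ : ZMod (ℓ^2)) * (r.val : ZMod (ℓ^2)) * y.b :=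
  Iff.rfl

lemma orb_Xr (hℓ : ℓ.Prime) (r : ZMod ℓ) : orb (Xr v r) = Om v r := by
  ext y
  constructor
  · rintro ⟨g, rfl⟩
    set G : QR (ℓ^2) ((ℓ : ZMod (ℓ^2)) * v) := (g : QR (ℓ^2) ((ℓ : ZMod (ℓ^2)) * v)) with hG
    have hga : pr ℓ G.a ≠ 0 := (isUnit_iff_prQ v hℓ _).1 g.isUnit
    constructor
    · apply (isUnit_iff_pr hℓ _).2
      have hb : (G * Xr v r).b
          = G.a * 1 + G.b * ((ℓ : ZMod (ℓ^2)) * (r.val : ZMod (ℓ^2)))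
            + ((ℓ : ZMod (ℓ^2)) * v) * G.b * 1 := rfl
      rw [hb]
      simpa [map_add, map_mul, pr_natCast, ZMod.natCast_self] using hga
    · show (G * Xr v r).a = (ℓ : ZMod (ℓ^2)) * (r.val : ZMod (ℓ^2)) * (G * Xr v r).b
      have h2 := lsq0 (ℓ := ℓ)
      simp only [QR.mul_a, QR.mul_b, Xr]
      linear_combination (-(((r.val : ZMod (ℓ^2))) * ((r.val : ZMod (ℓ^2))) * G.b)
        - v * ((r.val : ZMod (ℓ^2))) * G.b) * h2
  · rintro ⟨hb, ha⟩
    have hu : IsUnit (⟨y.b, 0⟩ : QR (ℓ^2) ((ℓ : ZMod (ℓ^2)) * v)) := by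
      apply (isUnit_iff_Q v hℓ _).2
      exact hb
    refine ⟨hu.unit, ?_⟩
    rw [IsUnit.unit_spec]
    ext
    · show y.a = y.b * ((ℓ : ZMod (ℓ^2)) * (r.val : ZMod (ℓ^2)))
      rw [ha]; ring
    · show y.b = y.b * 1 + 0 * _ + ((ℓ : ZMod (ℓ^2)) * v) * 0 * 1
      ring

lemma card_Om (hℓ : ℓ.Prime) (r : ZMod ℓ) : Nat.card (Om v r) = ℓ * (ℓ - 1) := by
  have e : Om v r ≃ {b : ZMod (ℓ^2) // IsUnit b} :=
    { toFun := fun y => ⟨y.1.b, y.2.1⟩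
      invFun := fun b => ⟨⟨(ℓ : ZMod (ℓ^2)) * (r.val : ZMod (ℓ^2)) * b, b⟩, b.2, rfl⟩
      left_inv := by
        rintro ⟨y, hy⟩
        apply Subtype.ext
        ext
        · exact hy.2.symm
        · rfl
      right_inv := fun b => rfl }
  rw [Nat.card_congr e]
  exact card_isUnit_zmod hℓ

lemma addOrderOf_Xr (hℓ : ℓ.Prime) (r : ZMod ℓ) : addOrderOf (Xr v r) = ℓ^2 := by
  haveI := Fact.mk hℓ
  rw [qAddOrderOf_eq_iff v hℓ]
  intro hc
  have : pr ℓ (Xr v r).b = pr ℓ 1 := rfl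
  rw [hc.2] at this
  simp at this

lemma addOrderOf_one_Q (hℓ : ℓ.Prime) :
    addOrderOf (1 : QR (ℓ^2) ((ℓ : ZMod (ℓ^2)) * v)) = ℓ^2 := by
  haveI := Fact.mk hℓ
  rw [qAddOrderOf_eq_iff v hℓ]
  intro hc
  have h1 : pr ℓ ((1 : QR (ℓ^2) ((ℓ : ZMod (ℓ^2)) * v))).a = pr ℓ 1 := rfl
  rw [hc.1] at h1
  simp at h1

end QeOrbits
section QeMain

variable {ℓ : ℕ}

lemma orbSet_Q_eq (hℓ : ℓ.Prime) (v : ZMod (ℓ^2)) :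
    orbSet (QR (ℓ^2) ((ℓ : ZMod (ℓ^2)) * v)) (ℓ^2)
      = insert {y : QR (ℓ^2) ((ℓ : ZMod (ℓ^2)) * v) | IsUnit y} (Set.range (Om v)) := by
  haveI := Fact.mk hℓ
  ext s
  constructor
  · rintro ⟨x, hx, rfl⟩
    by_cases hu : IsUnit x
    · exact Set.mem_insert_iff.2 (Or.inl (orb_of_isUnit hu))
    · have ha : pr ℓ x.a = 0 := by
        by_contra h
        exact hu ((isUnit_iff_prQ v hℓ x).2 h)
      have hb : pr ℓ x.b ≠ 0 := by
        intro h
        exact ((qAddOrderOf_eq_iff v hℓ x).1 hx) ⟨ha, h⟩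
      obtain ⟨s', hs'⟩ := (pr_eq_zero_iff hℓ x.a).1 ha
      set r : ZMod ℓ := pr ℓ s' * (pr ℓ x.b)⁻¹ with hr
      have hmem : x ∈ Om v r := by
        refine ⟨(isUnit_iff_pr hℓ _).2 hb, ?_⟩
        have key : (ℓ : ZMod (ℓ^2)) * s'
            = (ℓ : ZMod (ℓ^2)) * (((r.val : ℕ) : ZMod (ℓ^2)) * x.b) := by
          rw [mul_l_eq_iff hℓ, map_mul, pr_rval hℓ, hr, mul_assoc,
            inv_mul_cancel₀ hb, mul_one]
        rw [hs', key, mul_assoc]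
      apply Set.mem_insert_iff.2
      right
      refine ⟨r, ?_⟩
      rw [← orb_Xr v hℓ r]
      exact (orb_eq_of_mem (by rw [orb_Xr v hℓ r]; exact hmem)).symm
  · intro hs
    rcases Set.mem_insert_iff.1 hs with h | h
    · exact ⟨1, addOrderOf_one_Q v hℓ, by rw [h, orb_of_isUnit isUnit_one]⟩
    · obtain ⟨r, rfl⟩ := h
      exact ⟨Xr v r, addOrderOf_Xr v hℓ r, (orb_Xr v hℓ r).symm⟩

lemma unitSet_notin_range (hℓ : ℓ.Prime) (v : ZMod (ℓ^2)) :
    {y : QR (ℓ^2) ((ℓ : ZMod (ℓ^2)) * v) | IsUnit y} ∉ Set.range (Om v) := by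
  haveI : Fact (1 < ℓ^2) := ⟨by nlinarith [hℓ.two_le]⟩
  rintro ⟨r, hr⟩
  have h1 : (1 : QR (ℓ^2) ((ℓ : ZMod (ℓ^2)) * v)) ∈ Om v r := by
    rw [hr]; exact isUnit_one
  have : IsUnit ((1 : QR (ℓ^2) ((ℓ : ZMod (ℓ^2)) * v)).b) := h1.1
  rw [QR.one_b, isUnit_zero_iff] at this
  exact zero_ne_one this

lemma Om_injective (hℓ : ℓ.Prime) (v : ZMod (ℓ^2)) : Function.Injective (Om v) := by
  haveI : NeZero ℓ := ⟨hℓ.ne_zero⟩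
  intro r r' h
  have hX : Xr v r ∈ Om v r := ⟨by rw [Xr]; exact isUnit_one, by rw [Xr]; simp⟩
  rw [h] at hX
  have ha := hX.2
  have hXa : (Xr v r).a = (ℓ : ZMod (ℓ^2)) * ((r.val : ℕ) : ZMod (ℓ^2)) := rfl
  have hXb : (Xr v r).b = 1 := rfl
  rw [hXa, hXb, mul_one] at ha
  have := (mul_l_eq_iff hℓ _ _).1 ha
  rw [pr_rval hℓ, pr_rval hℓ] at this
  exact this

lemma card_unitSet_Q (hℓ : ℓ.Prime) (v : ZMod (ℓ^2)) :
    Nat.card {y : QR (ℓ^2) ((ℓ : ZMod (ℓ^2)) * v) | IsUnit y} = ℓ^3 * (ℓ - 1) := by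
  haveI : NeZero (ℓ^2) := ⟨pow_ne_zero 2 hℓ.ne_zero⟩
  have e : {y : QR (ℓ^2) ((ℓ : ZMod (ℓ^2)) * v) | IsUnit y}
      ≃ {a : ZMod (ℓ^2) // IsUnit a} × ZMod (ℓ^2) :=
    { toFun := fun y => (⟨y.1.a, (isUnit_iff_Q v hℓ y.1).1 y.2⟩, y.1.b)
      invFun := fun p => ⟨⟨p.1.1, p.2⟩, (isUnit_iff_Q v hℓ _).2 p.1.2⟩
      left_inv := by rintro ⟨⟨a, b⟩, hy⟩; rfl
      right_inv := by rintro ⟨⟨a, ha⟩, b⟩; rfl }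
  rw [Nat.card_congr e, Nat.card_prod, card_isUnit_zmod hℓ, Nat.card_zmod]
  obtain ⟨m, rfl⟩ : ∃ m, ℓ = m + 1 := ⟨ℓ - 1, by have := hℓ.two_le; omega⟩
  simp only [Nat.add_sub_cancel]
  ring

theorem QR_main (hℓ : ℓ.Prime) (v : ZMod (ℓ^2)) :
    Nat.card (orbSet (QR (ℓ^2) ((ℓ : ZMod (ℓ^2)) * v)) (ℓ^2)) = ℓ + 1 ∧
    Nat.card {s : Set (QR (ℓ^2) ((ℓ : ZMod (ℓ^2)) * v)) |
      s ∈ orbSet (QR (ℓ^2) ((ℓ : ZMod (ℓ^2)) * v)) (ℓ^2) ∧ Nat.card s = ℓ^3 * (ℓ - 1)} = 1 ∧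
    Nat.card {s : Set (QR (ℓ^2) ((ℓ : ZMod (ℓ^2)) * v)) |
      s ∈ orbSet (QR (ℓ^2) ((ℓ : ZMod (ℓ^2)) * v)) (ℓ^2) ∧ Nat.card s = ℓ * (ℓ - 1)} = ℓ := by
  haveI : NeZero (ℓ^2) := ⟨pow_ne_zero 2 hℓ.ne_zero⟩
  have horb := orbSet_Q_eq hℓ v
  have hnotin := unitSet_notin_range hℓ v
  have hinj := Om_injective hℓ v
  have hcardU := card_unitSet_Q hℓ v
  have hcardOm := card_Om v hℓ
  have hne : (ℓ^3 * (ℓ - 1) : ℕ) ≠ ℓ * (ℓ - 1) := by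
    have h2 := hℓ.two_le
    intro h
    have h3 : (ℓ^3 : ℕ) = ℓ := Nat.eq_of_mul_eq_mul_right (by omega) h
    have h4 : ℓ ^ 3 = ℓ * ℓ * ℓ := by ring
    rw [h4] at h3
    have h5 : 2 * 2 ≤ ℓ * ℓ := Nat.mul_le_mul h2 h2
    have h6 : 2 * 2 * ℓ ≤ ℓ * ℓ * ℓ := Nat.mul_le_mul_right ℓ h5
    linarith
  refine ⟨?_, ?_, ?_⟩
  · rw [horb, Nat.card_coe_set_eq,
      Set.ncard_insert_of_notMem hnotin (Set.toFinite _),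
      ← Nat.card_coe_set_eq, Nat.card_range_of_injective hinj, Nat.card_zmod]
  · have hset : {s : Set (QR (ℓ^2) ((ℓ : ZMod (ℓ^2)) * v)) |
        s ∈ orbSet (QR (ℓ^2) ((ℓ : ZMod (ℓ^2)) * v)) (ℓ^2) ∧ Nat.card s = ℓ^3 * (ℓ - 1)}
        = {{y : QR (ℓ^2) ((ℓ : ZMod (ℓ^2)) * v) | IsUnit y}} := by
      ext s
      constructor
      · rintro ⟨hs, hc⟩
        rw [horb] at hs
        rcases Set.mem_insert_iff.1 hs with h | h
        · exact h
        · obtain ⟨r, rfl⟩ := h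
          rw [hcardOm r] at hc
          exact absurd hc.symm hne
      · rintro rfl
        exact ⟨by rw [horb]; exact Set.mem_insert _ _, hcardU⟩
    rw [hset, Nat.card_coe_set_eq, Set.ncard_singleton]
  · have hset : {s : Set (QR (ℓ^2) ((ℓ : ZMod (ℓ^2)) * v)) |
        s ∈ orbSet (QR (ℓ^2) ((ℓ : ZMod (ℓ^2)) * v)) (ℓ^2) ∧ Nat.card s = ℓ * (ℓ - 1)}
        = Set.range (Om v) := by
      ext s
      constructor
      · rintro ⟨hs, hc⟩
        rw [horb] at hs
        rcases Set.mem_insert_iff.1 hs with h | h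
        · rw [h, hcardU] at hc
          exact absurd hc hne
        · exact h
      · rintro ⟨r, rfl⟩
        exact ⟨by rw [horb]; exact Set.mem_insert_iff.2 (Or.inr ⟨r, rfl⟩), hcardOm r⟩
    rw [hset, Nat.card_range_of_injective hinj, Nat.card_zmod]

end QeMain
section Transfer

variable {A B : Type*} [CommRing A] [CommRing B]

lemma orb_image (E : A ≃+* B) (x : A) : (⇑E) '' orb x = orb (E x) := by
  ext y
  constructor
  · rintro ⟨z, ⟨g, rfl⟩, rfl⟩
    refine ⟨Units.map E.toMulEquiv.toMonoidHom g, ?_⟩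
    simp [map_mul]
  · rintro ⟨g, rfl⟩
    refine ⟨(E.symm (g : B)) * x, ⟨Units.map E.symm.toMulEquiv.toMonoidHom g, rfl⟩, ?_⟩
    simp [map_mul]

lemma addOrderOf_ringEquiv (E : A ≃+* B) (x : A) : addOrderOf (E x) = addOrderOf x :=
  addOrderOf_injective (E : A →+ B) E.injective x

lemma orbSet_image (E : A ≃+* B) (m : ℕ) :
    orbSet B m = (Set.image ⇑E) '' orbSet A m := by
  ext s
  constructor
  · rintro ⟨x, hx, rfl⟩
    refine ⟨orb (E.symm x), ⟨E.symm x, ?_, rfl⟩, ?_⟩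
    · rw [addOrderOf_ringEquiv E.symm x, hx]
    · rw [orb_image E (E.symm x), E.apply_symm_apply]
  · rintro ⟨t, ⟨x, hx, rfl⟩, rfl⟩
    exact ⟨E x, by rw [addOrderOf_ringEquiv E x]; exact hx, orb_image E x⟩

lemma card_orbSet_transfer (E : A ≃+* B) (m : ℕ) :
    Nat.card (orbSet B m) = Nat.card (orbSet A m) := by
  rw [orbSet_image E m, Nat.card_image_of_injective (Set.image_injective.2 E.injective)]

lemma card_orbSet_filter_transfer (E : A ≃+* B) (m k : ℕ) :
    Nat.card {s : Set B | s ∈ orbSet B m ∧ Nat.card s = k}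
      = Nat.card {s : Set A | s ∈ orbSet A m ∧ Nat.card s = k} := by
  have hset : {s : Set B | s ∈ orbSet B m ∧ Nat.card s = k}
      = (Set.image ⇑E) '' {s : Set A | s ∈ orbSet A m ∧ Nat.card s = k} := by
    ext s
    constructor
    · rintro ⟨hs, hc⟩
      rw [orbSet_image E m] at hs
      obtain ⟨t, ht, rfl⟩ := hs
      refine ⟨t, ⟨ht, ?_⟩, rfl⟩
      rw [← hc, Nat.card_image_of_injective E.injective]
    · rintro ⟨t, ⟨ht, hc⟩, rfl⟩
      refine ⟨?_, ?_⟩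
      · rw [orbSet_image E m]; exact ⟨t, ht, rfl⟩
      · rw [Nat.card_image_of_injective E.injective, hc]
  rw [hset, Nat.card_image_of_injective (Set.image_injective.2 E.injective)]

end Transfer
section NumberTheory

variable {K : Type*} [Field K] [Algebra ℚ K]

lemma mem_condOrder_iff {f : ℕ} {x : K} :
    x ∈ condOrder K f ↔ ∃ (m : ℤ) (y : K), y ∈ integralClosure ℤ K ∧ x = m + f * y := by
  constructor
  · intro hx
    have hle : condOrder K f ≤ {
        carrier := {x : K | ∃ (m : ℤ) (y : K), y ∈ integralClosure ℤ K ∧ x = m + f * y}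
        one_mem' := ⟨1, 0, Subalgebra.zero_mem _, by simp⟩
        zero_mem' := ⟨0, 0, Subalgebra.zero_mem _, by simp⟩
        add_mem' := by
          rintro a b ⟨m, y, hy, rfl⟩ ⟨m', y', hy', rfl⟩
          exact ⟨m + m', y + y', Subalgebra.add_mem _ hy hy', by push_cast; ring⟩
        neg_mem' := by
          rintro a ⟨m, y, hy, rfl⟩
          exact ⟨-m, -y, Subalgebra.neg_mem _ hy, by push_cast; ring⟩
        mul_mem' := by
          rintro a b ⟨m, y, hy, rfl⟩ ⟨m', y', hy', rfl⟩
          refine ⟨m * m', (m : K) * y' + (m' : K) * y + (f : K) * y * y', ?_, by push_cast; ring⟩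
          have h1 : ((m : ℤ) : K) ∈ integralClosure ℤ K := intCast_mem _ m
          have h2 : ((m' : ℤ) : K) ∈ integralClosure ℤ K := intCast_mem _ m'
          have h3 : ((f : ℕ) : K) ∈ integralClosure ℤ K := natCast_mem _ f
          exact Subalgebra.add_mem _ (Subalgebra.add_mem _ (Subalgebra.mul_mem _ h1 hy')
            (Subalgebra.mul_mem _ h2 hy))
            (Subalgebra.mul_mem _ (Subalgebra.mul_mem _ h3 hy) hy') } := by
      apply Subring.closure_le.2
      rintro z ⟨y, hy, rfl⟩
      exact ⟨0, y, hy, by push_cast; ring⟩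
    exact hle hx
  · rintro ⟨m, y, hy, rfl⟩
    have h1 : ((m : ℤ) : K) ∈ condOrder K f := intCast_mem _ m
    have h2 : (f : K) * y ∈ condOrder K f := Subring.subset_closure ⟨y, hy, rfl⟩
    exact Subring.add_mem _ h1 h2

lemma condOrder_le_integralClosure {f : ℕ} {x : K} (hx : x ∈ condOrder K f) :
    x ∈ integralClosure ℤ K := by
  obtain ⟨m, y, hy, rfl⟩ := mem_condOrder_iff.1 hx
  exact Subalgebra.add_mem _ (intCast_mem _ m)
    (Subalgebra.mul_mem _ (natCast_mem _ f) hy)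

lemma rat_in_integralClosure {q : ℚ} (h : algebraMap ℚ K q ∈ integralClosure ℤ K) :
    ∃ m : ℤ, q = m := by
  haveI : IsScalarTower ℤ ℚ K := IsScalarTower.of_algebraMap_eq (by
    intro x
    simp [eq_intCast])
  have h2 : IsIntegral ℤ (algebraMap ℚ K q) := h
  have h3 : IsIntegral ℤ q := by
    rwa [isIntegral_algebraMap_iff (algebraMap ℚ K).injective] at h2
  obtain ⟨y, hy⟩ := IsIntegrallyClosed.isIntegral_iff.1 h3
  exact ⟨y, by rw [← hy, eq_intCast]⟩

end NumberTheory
section GoodBasis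

set_option maxHeartbeats 2000000 in
theorem exists_good_basis (K : Type*) [Field K] [Algebra ℚ K]
    (hdim : Module.finrank ℚ K = 2) (f ℓ : ℕ) (hf : 0 < f) (hℓ : ℓ.Prime) (hdvd : ℓ ∣ f) :
    ∃ τ : K, τ ∈ condOrder K f ∧ ∃ w v : ℤ,
      τ^2 = (ℓ:K)^2 * w + (ℓ:K) * v * τ ∧
      (∀ x ∈ condOrder K f, ∃ a b : ℤ, x = a + b * τ) ∧
      (∀ a b : ℤ, (a:K) + b * τ = 0 → a = 0 ∧ b = 0) := by
  haveI : CharZero K := charZero_of_injective_algebraMap (algebraMap ℚ K).injective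
  haveI : FiniteDimensional ℚ K := Module.finite_of_finrank_eq_succ (n := 1) hdim
  haveI : IsScalarTower ℤ ℚ K := IsScalarTower.of_algebraMap_eq (by intro x; simp [eq_intCast])
  -- choose θ outside ℚ·1
  obtain ⟨θ, hθ⟩ : ∃ θ : K, θ ∉ (ℚ ∙ (1:K)) := by
    by_contra hc
    push_neg at hc
    have htop : (ℚ ∙ (1:K)) = ⊤ := Submodule.eq_top_iff'.2 hc
    have h1 : Module.finrank ℚ ↥(ℚ ∙ (1:K)) = 1 := finrank_span_singleton one_ne_zero
    rw [htop, finrank_top, hdim] at h1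
    omega
  have hli : LinearIndependent ℚ ![(1:K), θ] := by
    rw [linearIndependent_fin2]
    constructor
    · simp only [Matrix.cons_val_one, Matrix.head_cons, Matrix.cons_val_zero]
      intro h0
      exact hθ (h0 ▸ Submodule.zero_mem _)
    · intro a ha
      simp only [Matrix.cons_val_one, Matrix.head_cons, Matrix.cons_val_zero] at ha
      apply hθ
      have ha0 : a ≠ 0 := by
        rintro rfl
        rw [zero_smul] at ha
        exact one_ne_zero ha.symm
      exact Submodule.mem_span_singleton.2
        ⟨a⁻¹, by rw [← ha, smul_smul, inv_mul_cancel₀ ha0, one_smul]⟩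
  let bb : Module.Basis (Fin 2) ℚ K := basisOfLinearIndependentOfCardEqFinrank hli (by rw [hdim]; simp)
  have hbb : ⇑bb = ![(1:K), θ] := coe_basisOfLinearIndependentOfCardEqFinrank hli _
  set c : K →ₗ[ℚ] ℚ := bb.coord 1 with hcdef
  have hc1 : c 1 = 0 := by
    have h0 : (1:K) = bb 0 := by rw [hbb]; simp
    rw [h0, hcdef]
    rw [Module.Basis.coord_apply, Module.Basis.repr_self]
    simp
  have hcθ : c θ = 1 := by
    have h0 : θ = bb 1 := by rw [hbb]; simp
    rw [h0, hcdef, Module.Basis.coord_apply, Module.Basis.repr_self]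
    simp
  have hker : ∀ x : K, c x = 0 → ∃ q : ℚ, x = algebraMap ℚ K q := by
    intro x hx
    refine ⟨bb.repr x 0, ?_⟩
    have hsum := bb.sum_repr x
    rw [Fin.sum_univ_two] at hsum
    have h1 : bb.repr x 1 = 0 := by rw [← Module.Basis.coord_apply]; exact hx
    rw [h1, zero_smul, add_zero] at hsum
    have h2 : bb 0 = (1:K) := by rw [hbb]; simp
    rw [Algebra.algebraMap_eq_smul_one, ← h2]
    exact hsum.symm
  have hcmul : ∀ (q : ℚ) (y : K), c (algebraMap ℚ K q * y) = q * c y := by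
    intro q y
    rw [← Algebra.smul_def, map_smul, smul_eq_mul]
  have hcint : ∀ (m : ℤ) (y : K), c ((m:K) * y) = m * c y := by
    intro m y
    rw [show ((m:ℤ):K) = algebraMap ℚ K (m:ℚ) by rw [map_intCast], hcmul]
  have hcnat : ∀ (m : ℕ) (y : K), c ((m:K) * y) = m * c y := by
    intro m y
    rw [show ((m:ℕ):K) = algebraMap ℚ K (m:ℚ) by rw [map_natCast], hcmul]
  have hcint' : ∀ (m : ℤ), c ((m:ℤ):K) = 0 := by
    intro m
    rw [show ((m:ℤ):K) = (m:K) * 1 by ring, hcint, hc1, mul_zero]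
  -- common denominator for the integral closure
  haveI : IsNoetherian ℤ ↥(integralClosure ℤ K) := IsIntegralClosure.isNoetherian ℤ ℚ K _
  obtain ⟨s, hs⟩ := IsNoetherian.noetherian (⊤ : Submodule ℤ ↥(integralClosure ℤ K))
  set d : ℤ := ∏ i ∈ s, ((c (i:K)).den : ℤ) with hd
  have hd0 : d ≠ 0 := by
    rw [hd]
    apply Finset.prod_ne_zero_iff.2
    intro i _
    exact_mod_cast (c (i:K)).den_nz
  have hqd : ∀ (q : ℚ) (e : ℤ), (((q.den : ℤ) * e : ℤ):ℚ) * q = ((e * q.num : ℤ):ℚ) := by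
    intro q e
    have hden0 : ((q.den:ℚ)) ≠ 0 := by exact_mod_cast q.den_nz
    have h2 : (q.num:ℚ) = q * q.den := (div_eq_iff hden0).1 (Rat.num_div_den q)
    push_cast
    rw [h2]
    ring
  have hden : ∀ y : K, y ∈ integralClosure ℤ K → ∃ k : ℤ, (d:ℚ) * c y = k := by
    intro y hy
    have hmem : (⟨y, hy⟩ : ↥(integralClosure ℤ K)) ∈ Submodule.span ℤ (↑s) := by
      rw [hs]; trivial
    refine Submodule.span_induction
      (p := fun (z : ↥(integralClosure ℤ K))
        (_ : z ∈ Submodule.span ℤ (↑s : Set ↥(integralClosure ℤ K))) =>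
        ∃ k : ℤ, (d:ℚ) * c (z:K) = k) ?_ ?_ ?_ ?_ hmem
    · intro z hz
      have hdvd' : ((c (z:K)).den : ℤ) ∣ d := by
        rw [hd]
        exact Finset.dvd_prod_of_mem _ (Finset.mem_coe.1 hz)
      obtain ⟨e, he⟩ := hdvd'
      exact ⟨e * (c (z:K)).num, by rw [he]; exact hqd _ e⟩
    · exact ⟨0, by simp⟩
    · rintro u w hu hw ⟨k1, hk1⟩ ⟨k2, hk2⟩
      refine ⟨k1 + k2, ?_⟩
      have hcoe : ((u + w : ↥(integralClosure ℤ K)) : K) = (u:K) + (w:K) := rfl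
      rw [hcoe, map_add]
      push_cast
      linear_combination hk1 + hk2
    · rintro a z hz ⟨k, hk⟩
      refine ⟨a * k, ?_⟩
      have hcoe : ((a • z : ↥(integralClosure ℤ K)) : K) = a • (z:K) := rfl
      rw [hcoe, map_zsmul, zsmul_eq_mul]
      push_cast
      linear_combination (a:ℚ) * hk
  -- a nonzero element of the order with nonzero coordinate
  haveI : Algebra.IsAlgebraic ℚ K := Algebra.IsAlgebraic.of_finite ℚ K
  have halg : IsAlgebraic ℤ θ :=
    (IsFractionRing.isAlgebraic_iff ℤ ℚ K).2 (Algebra.IsAlgebraic.isAlgebraic θ)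
  obtain ⟨yz, hyz0, hint⟩ := halg.exists_integral_multiple
  have hy1 : (yz : K) * θ ∈ integralClosure ℤ K := by
    rw [mem_integralClosure_iff, ← zsmul_eq_mul]
    exact hint
  have hnontriv : ∃ x ∈ condOrder K f, c x ≠ 0 := by
    refine ⟨(f:K) * ((yz:K) * θ), mem_condOrder_iff.2 ⟨0, _, hy1, by push_cast; ring⟩, ?_⟩
    rw [hcnat, hcint, hcθ, mul_one]
    have : ((f:ℚ)) * (yz:ℚ) ≠ 0 :=
      mul_ne_zero (by exact_mod_cast hf.ne') (by exact_mod_cast hyz0)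
    exact_mod_cast this
  -- the subgroup of values
  let A : AddSubgroup ℤ := {
    carrier := {b : ℤ | ∃ x ∈ condOrder K f, (b:ℚ) = d * c x}
    zero_mem' := ⟨0, Subring.zero_mem _, by simp⟩
    add_mem' := by
      rintro b b' ⟨x, hx, hb⟩ ⟨x', hx', hb'⟩
      refine ⟨x + x', Subring.add_mem _ hx hx', ?_⟩
      rw [map_add]
      push_cast
      linear_combination hb + hb'
    neg_mem' := by
      rintro b ⟨x, hx, hb⟩
      refine ⟨-x, Subring.neg_mem _ hx, ?_⟩
      rw [map_neg]
      push_cast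
      linear_combination -hb }
  obtain ⟨a₀, hA⟩ := Int.subgroup_cyclic A
  obtain ⟨x₁, hx₁O, hcx₁⟩ := hnontriv
  obtain ⟨k₁, hk₁⟩ := hden x₁ (condOrder_le_integralClosure hx₁O)
  have hk₁0 : k₁ ≠ 0 := by
    rintro rfl
    rcases mul_eq_zero.1 (by exact_mod_cast hk₁ : (d:ℚ) * c x₁ = 0) with h | h
    · exact hd0 (by exact_mod_cast h)
    · exact hcx₁ h
  have hk₁A : k₁ ∈ A := ⟨x₁, hx₁O, hk₁.symm⟩
  have ha₀0 : a₀ ≠ 0 := by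
    rintro rfl
    rw [hA] at hk₁A
    rw [show AddSubgroup.closure ({0} : Set ℤ) = ⊥ by simp] at hk₁A
    exact hk₁0 (AddSubgroup.mem_bot.1 hk₁A)
  have ha₀A : a₀ ∈ A := by
    rw [hA]
    exact AddSubgroup.subset_closure rfl
  obtain ⟨x₀, hx₀O, hax₀⟩ := ha₀A
  obtain ⟨m₀, y₀', hy₀', hx₀⟩ := mem_condOrder_iff.1 hx₀O
  set τ : K := (f:K) * y₀' with hτdef
  have hτO : τ ∈ condOrder K f := mem_condOrder_iff.2 ⟨0, y₀', hy₀', by push_cast; ring⟩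
  have hcτ : c τ = c x₀ := by
    rw [hx₀, map_add, hcint' m₀, zero_add]
  have hdcτ : (a₀:ℚ) = d * c τ := by rw [hcτ]; exact hax₀
  have hcτ0 : c τ ≠ 0 := by
    intro h
    rw [h, mul_zero] at hdcτ
    exact ha₀0 (by exact_mod_cast hdcτ)
  have hspan : ∀ x ∈ condOrder K f, ∃ a b : ℤ, x = a + b * τ := by
    intro x hxO
    obtain ⟨k, hk⟩ := hden x (condOrder_le_integralClosure hxO)
    have hkA : k ∈ A := ⟨x, hxO, hk.symm⟩
    rw [hA] at hkA
    obtain ⟨b, hb⟩ := AddSubgroup.mem_closure_singleton.1 hkA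
    rw [smul_eq_mul] at hb
    have hcx : c x = b * c τ := by
      have h3 : (d:ℚ) * c x = (d:ℚ) * (b * c τ) := by
        rw [hk, ← hb]
        push_cast
        linear_combination (b:ℚ) * hdcτ
      exact mul_left_cancel₀ (by exact_mod_cast hd0) h3
    have hx' : c (x - (b:K) * τ) = 0 := by
      rw [map_sub, hcint, hcx]
      ring
    obtain ⟨q, hq⟩ := hker _ hx'
    have hxbO : x - (b:K) * τ ∈ condOrder K f :=
      Subring.sub_mem _ hxO (Subring.mul_mem _ (intCast_mem _ b) hτO)
    have hqO : algebraMap ℚ K q ∈ integralClosure ℤ K := by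
      rw [← hq]
      exact condOrder_le_integralClosure hxbO
    obtain ⟨a, ha⟩ := rat_in_integralClosure hqO
    refine ⟨a, b, ?_⟩
    have hend : x - (b:K) * τ = (a:K) := by rw [hq, ha, map_intCast]
    linear_combination hend
  have huniq : ∀ a b : ℤ, (a:K) + b * τ = 0 → a = 0 ∧ b = 0 := by
    intro a b hab
    have h1 : c ((a:K) + (b:K) * τ) = 0 := by rw [hab, map_zero]
    rw [map_add, hcint, hcint'] at h1
    rw [zero_add] at h1
    have hb : (b:ℚ) = 0 := by
      rcases mul_eq_zero.1 h1 with h | h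
      · exact h
      · exact absurd h hcτ0
    have hb0 : b = 0 := by exact_mod_cast hb
    subst hb0
    rw [Int.cast_zero, zero_mul, add_zero] at hab
    exact ⟨by exact_mod_cast hab, rfl⟩
  -- the quadratic relation
  obtain ⟨g, hg⟩ := hdvd
  have hwmem : (g:K) * (y₀' * y₀') ∈ integralClosure ℤ K :=
    Subalgebra.mul_mem _ (natCast_mem _ g) (Subalgebra.mul_mem _ hy₀' hy₀')
  set z : K := (f:K) * ((g:K) * (y₀' * y₀')) with hzdef
  have hzO : z ∈ condOrder K f := mem_condOrder_iff.2 ⟨0, _, hwmem, by push_cast; ring⟩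
  have hfK : (f:K) = (ℓ:K) * (g:K) := by rw [hg]; push_cast; ring
  have hτ2 : τ^2 = (ℓ:K) * z := by
    rw [hτdef, hzdef, hfK]
    ring
  obtain ⟨az, bz, hzab⟩ := hspan z hzO
  have hfaz : ∃ mz : ℤ, az = mz * f := by
    have hu : (az:K) = (f:K) * ((g:K) * (y₀' * y₀') - (bz:K) * y₀') := by
      have h5 : (az:K) = z - (bz:K) * τ := by linear_combination -hzab
      rw [h5, hzdef, hτdef]
      ring
    have humem : (g:K) * (y₀' * y₀') - (bz:K) * y₀' ∈ integralClosure ℤ K :=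
      Subalgebra.sub_mem _ hwmem (Subalgebra.mul_mem _ (intCast_mem _ bz) hy₀')
    have hfK0 : (f:K) ≠ 0 := by
      exact_mod_cast hf.ne'
    have hqrep : algebraMap ℚ K ((az:ℚ) / (f:ℚ)) = (g:K) * (y₀' * y₀') - (bz:K) * y₀' := by
      rw [map_div₀, map_intCast, map_natCast, div_eq_iff hfK0]
      linear_combination hu
    have hmem2 : algebraMap ℚ K ((az:ℚ)/(f:ℚ)) ∈ integralClosure ℤ K := by
      rw [hqrep]; exact humem
    obtain ⟨mz, hmz⟩ := rat_in_integralClosure hmem2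
    have hfQ : (f:ℚ) ≠ 0 := by exact_mod_cast hf.ne'
    have h6 := (div_eq_iff hfQ).1 hmz
    exact ⟨mz, by exact_mod_cast h6⟩
  obtain ⟨mz, hmz⟩ := hfaz
  refine ⟨τ, hτO, mz * g, bz, ?_, hspan, huniq⟩
  have haK : (az:K) = (mz:K) * (f:K) := by rw [hmz]; push_cast; ring
  rw [hτ2, hzab, haK, hfK]
  push_cast
  ring

end GoodBasis
section EquivConstruction

set_option synthInstance.maxHeartbeats 1000000 in
set_option maxHeartbeats 2000000 in
theorem equiv_of_basis (K : Type*) [Field K] [Algebra ℚ K]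
    (f ℓ : ℕ) (hℓ : ℓ.Prime) {τ : K} (hτ : τ ∈ condOrder K f) {w v : ℤ}
    (hrel : τ^2 = (ℓ:K)^2 * w + (ℓ:K) * v * τ)
    (hspan : ∀ x ∈ condOrder K f, ∃ a b : ℤ, x = a + b * τ)
    (huniq : ∀ a b : ℤ, (a:K) + b * τ = 0 → a = 0 ∧ b = 0) :
    Nonempty (QR (ℓ^2) ((ℓ : ZMod (ℓ^2)) * ((v : ℤ) : ZMod (ℓ^2))) ≃+*
      ((condOrder K f) ⧸ (Ideal.span {((ℓ : condOrder K f)) ^ 2}))) := by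
  haveI : NeZero (ℓ^2) := ⟨pow_ne_zero 2 hℓ.ne_zero⟩
  set O : Subring K := condOrder K f with hO
  set I : Ideal O := Ideal.span {((ℓ : O)) ^ 2} with hI
  set τO : O := ⟨τ, hτ⟩ with hτO'
  have hτ2O : τO^2 = (ℓ:O)^2 * ((w:ℤ):O) + (ℓ:O) * ((v:ℤ):O) * τO := by
    apply Subtype.ext
    push_cast
    exact hrel
  have hl2I : ((ℓ:O))^2 ∈ I := Ideal.subset_span rfl
  have hker2 : ∀ x ∈ Ideal.span ({((ℓ^2 : ℕ) : ℤ)} : Set ℤ),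
      (Int.castRingHom (O ⧸ I)) x = 0 := by
    intro x hx
    obtain ⟨k, rfl⟩ := Ideal.mem_span_singleton.1 hx
    rw [map_mul]
    have h1 : (Int.castRingHom (O ⧸ I)) ((ℓ^2 : ℕ) : ℤ) = 0 := by
      have h2 : ((((ℓ^2 : ℕ) : ℤ)) : O ⧸ I) = ((ℓ : O ⧸ I))^2 := by push_cast; ring
      have h3 : ((ℓ : O ⧸ I)) = Ideal.Quotient.mk I ((ℓ : O)) := (map_natCast _ ℓ).symm
      show ((((ℓ^2 : ℕ) : ℤ)) : O ⧸ I) = 0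
      rw [h2, h3, ← map_pow]
      exact Ideal.Quotient.eq_zero_iff_mem.2 hl2I
    rw [h1, zero_mul]
  set φ : ZMod (ℓ^2) →+* O ⧸ I :=
    (Ideal.Quotient.lift _ (Int.castRingHom (O ⧸ I)) hker2).comp
      (Int.quotientSpanNatEquivZMod (ℓ^2)).symm.toRingHom with hφ
  set T : O ⧸ I := Ideal.Quotient.mk I τO with hT'
  have hmk0 : ((ℓ : O ⧸ I))^2 = 0 := by
    have h3 : ((ℓ : O ⧸ I)) = Ideal.Quotient.mk I ((ℓ : O)) := (map_natCast _ ℓ).symm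
    rw [h3, ← map_pow]
    exact Ideal.Quotient.eq_zero_iff_mem.2 hl2I
  have hT : T * T = (ℓ : O ⧸ I) * ((v : ℤ) : O ⧸ I) * T := by
    have h4 := congrArg (Ideal.Quotient.mk I) hτ2O
    simp only [map_mul, map_add, map_pow, map_natCast, map_intCast] at h4
    rw [hmk0, zero_mul, zero_add] at h4
    rw [← hT'] at h4
    rw [← pow_two]
    exact h4
  set F : QR (ℓ^2) ((ℓ : ZMod (ℓ^2)) * ((v : ℤ) : ZMod (ℓ^2))) →+* O ⧸ I :=
    { toFun := fun x => φ x.a + φ x.b * T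
      map_one' := by simp
      map_zero' := by simp
      map_add' := by
        intro x y
        simp only [QR.add_a, QR.add_b, map_add]
        ring
      map_mul' := by
        intro x y
        simp only [QR.mul_a, QR.mul_b, map_add, map_mul, map_natCast, map_intCast]
        linear_combination (-(φ x.b * φ y.b)) * hT } with hF
  have hFapp : ∀ x, F x = φ x.a + φ x.b * T := fun _ => rfl
  have hsurj : Function.Surjective F := by
    intro rq
    obtain ⟨x, rfl⟩ := Ideal.Quotient.mk_surjective rq
    obtain ⟨a, b, hab⟩ := hspan (x : K) x.2
    refine ⟨⟨((a : ℤ) : ZMod (ℓ^2)), ((b : ℤ) : ZMod (ℓ^2))⟩, ?_⟩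
    rw [hFapp]
    simp only [map_intCast]
    have hxO : x = ((a : ℤ) : O) + ((b : ℤ) : O) * τO := by
      apply Subtype.ext
      push_cast
      exact hab
    rw [hxO, map_add, map_mul, map_intCast, map_intCast, ← hT']
  have hinj0 : ∀ x, F x = 0 → x = 0 := by
    intro x hx0
    set ta : ℤ := (x.a.val : ℤ) with hta
    set tb : ℤ := (x.b.val : ℤ) with htb
    have ha : ((ta : ℤ) : ZMod (ℓ^2)) = x.a := by
      rw [hta]; push_cast; exact ZMod.natCast_rightInverse x.a
    have hb : ((tb : ℤ) : ZMod (ℓ^2)) = x.b := by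
      rw [htb]; push_cast; exact ZMod.natCast_rightInverse x.b
    rw [hFapp, ← ha, ← hb, map_intCast, map_intCast] at hx0
    have h1 : Ideal.Quotient.mk I (((ta : ℤ) : O) + ((tb : ℤ) : O) * τO) = 0 := by
      rw [map_add, map_mul, map_intCast, map_intCast, ← hT']
      exact hx0
    have h2 : ((ta : ℤ) : O) + ((tb : ℤ) : O) * τO ∈ I := Ideal.Quotient.eq_zero_iff_mem.1 h1
    rw [hI] at h2
    obtain ⟨zO, hzO⟩ := Ideal.mem_span_singleton.1 h2
    obtain ⟨a', b', hab'⟩ := hspan (zO : K) zO.2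
    have h4 := congrArg (fun t : O => (t : K)) hzO
    push_cast at h4
    rw [hab'] at h4
    have h5 := huniq (ta - ℓ^2 * a') (tb - ℓ^2 * b') (by push_cast; linear_combination h4)
    have hl20 : ((ℓ^2 : ℤ) : ZMod (ℓ^2)) = 0 := by
      have := ZMod.natCast_self (ℓ^2)
      exact_mod_cast this
    have hxa : x.a = 0 := by
      rw [← ha, sub_eq_zero.1 h5.1, Int.cast_mul, hl20, zero_mul]
    have hxb : x.b = 0 := by
      rw [← hb, sub_eq_zero.1 h5.2, Int.cast_mul, hl20, zero_mul]
    ext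
    · rw [hxa]; rfl
    · rw [hxb]; rfl
  exact ⟨RingEquiv.ofBijective F ⟨(injective_iff_map_eq_zero F).2 hinj0, hsurj⟩⟩

end EquivConstruction

/-- Let `𝒪 = ℤ + f𝒪_K` be the order of conductor `f` in an imaginary
quadratic field `K` and `ℓ` a prime dividing `f`.  Then `(𝒪/ℓ²𝒪)ˣ` acting on the elements of
`𝒪/ℓ²𝒪` of additive order `ℓ²` has exactly `ℓ + 1` orbits: one of size `ℓ³(ℓ − 1)` and `ℓ`
of size `ℓ(ℓ − 1)`. -/
theorem cartan_orbits_ell_sq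
    (K : Type*) [Field K] [Algebra ℚ K]
    (hdim : Module.finrank ℚ K = 2) (himag : IsEmpty (K →+* ℝ))
    (f ℓ : ℕ) (hf : 0 < f) (hℓ : ℓ.Prime) (hdvd : ℓ ∣ f) :
    let R := (condOrder K f) ⧸ (Ideal.span {((ℓ : condOrder K f)) ^ 2})
    let orbs : Set (Set R) :=
      {s | ∃ x : R, addOrderOf x = ℓ ^ 2 ∧ s = {y | ∃ g : Rˣ, y = (g : R) * x}}
    Nat.card orbs = ℓ + 1 ∧
    Nat.card {s : Set R | s ∈ orbs ∧ Nat.card s = ℓ ^ 3 * (ℓ - 1)} = 1 ∧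
    Nat.card {s : Set R | s ∈ orbs ∧ Nat.card s = ℓ * (ℓ - 1)} = ℓ := by
  intro R orbs
  obtain ⟨τ, hτ, w, v, hrel, hspan, huniq⟩ := exists_good_basis K hdim f ℓ hf hℓ hdvd
  obtain ⟨E⟩ := equiv_of_basis K f ℓ hℓ hτ hrel hspan huniq
  have main := QR_main hℓ ((v : ZMod (ℓ^2)))
  have h1 := card_orbSet_transfer E (ℓ^2)
  have h2 := card_orbSet_filter_transfer E (ℓ^2) (ℓ^3 * (ℓ-1))
  have h3 := card_orbSet_filter_transfer E (ℓ^2) (ℓ * (ℓ-1))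
  refine ⟨?_, ?_, ?_⟩
  · show Nat.card
      (orbSet ((condOrder K f) ⧸ (Ideal.span {((ℓ : condOrder K f)) ^ 2})) (ℓ^2)) = ℓ + 1
    rw [h1]
    exact main.1
  · show Nat.card {s : Set ((condOrder K f) ⧸ (Ideal.span {((ℓ : condOrder K f)) ^ 2})) |
      s ∈ orbSet ((condOrder K f) ⧸ (Ideal.span {((ℓ : condOrder K f)) ^ 2})) (ℓ^2) ∧
      Nat.card s = ℓ^3 * (ℓ - 1)} = 1
    rw [h2]
    exact main.2.1
  · show Nat.card {s : Set ((condOrder K f) ⧸ (Ideal.span {((ℓ : condOrder K f)) ^ 2})) |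
      s ∈ orbSet ((condOrder K f) ⧸ (Ideal.span {((ℓ : condOrder K f)) ^ 2})) (ℓ^2) ∧
      Nat.card s = ℓ * (ℓ - 1)} = ℓ
    rw [h3]
    exact main.2.2
end
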